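/- Leap days recur exactly every 1461 days from the epoch (2000, 3, 1) within the bounds (1900, 3, 1) to (2100, 2, 28): for every valid date D = (y, m, d) with (1900, 3, 1) ≤ D ≤ (2100, 2, 28), we have m = 2 and d = 29 if and only if toΔ(D) ≡ 1460 (mod 1461). -/
import Mathlib


/-- A date is a triple of integers (year, month, day). -/
structure Date where
  y : ℤ
  m : ℤ
  d : ℤ

/-- A year is a leap year iff divisible by 4 and (not by 100, or by 400). -/
def isLeap (y : ℤ) : Prop :=
  y % 4 = 0 ∧ (y % 100 ≠ 0 ∨ y % 400 = 0)

/-- Number of days in month `m` of year `y`. -/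
def nbdays (y m : ℤ) : ℤ :=
  if m = 4 ∨ m = 6 ∨ m = 9 ∨ m = 11 then 30
  else if m = 2 then
    (if y % 4 = 0 ∧ (y % 100 ≠ 0 ∨ y % 400 = 0) then 29 else 28)
  else 31

/-- A date is valid iff `1 ≤ m ≤ 12` and `1 ≤ d ≤ nbdays y m`. -/
def Date.valid (D : Date) : Prop :=
  1 ≤ D.m ∧ D.m ≤ 12 ∧ 1 ≤ D.d ∧ D.d ≤ nbdays D.y D.m

/-- Month addition `(y, m, d) +m n`, with round-down of the day component. -/
def addMonths (D : Date) (n : ℤ) : Date :=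
  ⟨D.y + (D.m - 1 + n) / 12,
   1 + (D.m - 1 + n) % 12,
   min D.d (nbdays (D.y + (D.m - 1 + n) / 12) (1 + (D.m - 1 + n) % 12))⟩

/-- A configuration of the small-step day-addition machine:
either a pending addition `D +D n`, or a finished date. -/
inductive Conf where
  | pending (D : Date) (n : ℤ)
  | done (D : Date)

/-- Small-step rules for day addition `+D`. -/
inductive Step : Conf → Conf → Prop where
  | add_days {y m d n : ℤ}
      (h1 : 1 ≤ d + n) (h2 : d + n ≤ nbdays y m) :
      Step (Conf.pending ⟨y, m, d⟩ n) (Conf.done ⟨y, m, d + n⟩)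
  | add_days_over {y m d n : ℤ}
      (h : d + n > nbdays y m) :
      Step (Conf.pending ⟨y, m, d⟩ n)
        (Conf.pending (addMonths ⟨y, m, 1⟩ 1) (n - (nbdays y m - d) - 1))
  | add_days_under1 {y m d n : ℤ}
      (h1 : 1 < d) (h2 : d + n ≤ 0) :
      Step (Conf.pending ⟨y, m, d⟩ n) (Conf.pending ⟨y, m, 1⟩ (d - 1 + n))
  | add_days_under2 {y m n y' m' : ℤ}
      (h1 : 1 + n ≤ 0) (h2 : addMonths ⟨y, m, 1⟩ (-1) = ⟨y', m', 1⟩) :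
      Step (Conf.pending ⟨y, m, 1⟩ n) (Conf.pending ⟨y', m', 1⟩ (n + nbdays y' m'))

/-- Reduction in finitely many steps. -/
def Reduces : Conf → Conf → Prop := Relation.ReflTransGen Step

instance : Nonempty Date := ⟨⟨2000, 3, 1⟩⟩

/-- `addDays D n` is the unique valid normal form of `D +D n`
(when it exists; arbitrary otherwise). -/
noncomputable def addDays (D : Date) (n : ℤ) : Date :=
  Classical.epsilon fun D' : Date =>
    D'.valid ∧ Reduces (Conf.pending D n) (Conf.done D')

/-- Date-period addition `D +P (ny, nm, nd) = (D +m (12·ny + nm)) +D nd`. -/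
noncomputable def addPeriod (D : Date) (P : ℤ × ℤ × ℤ) : Date :=
  addDays (addMonths D (12 * P.1 + P.2.1)) P.2.2

/-- Lexicographic order on dates. -/
def Date.le (a b : Date) : Prop :=
  a.y < b.y ∨ (a.y = b.y ∧ a.m < b.m) ∨ (a.y = b.y ∧ a.m = b.m ∧ a.d ≤ b.d)

/-- Strict lexicographic order on dates. -/
def Date.lt (a b : Date) : Prop :=
  a.y < b.y ∨ (a.y = b.y ∧ a.m < b.m) ∨ (a.y = b.y ∧ a.m = b.m ∧ a.d < b.d)

/-- The epoch date: March 1, 2000. -/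
def epoch : Date := ⟨2000, 3, 1⟩

/-- `toDelta D` is the unique integer `n` with `epoch +D n = D`
(when it exists; arbitrary otherwise). -/
noncomputable def toDelta (D : Date) : ℤ :=
  Classical.epsilon fun n : ℤ => addDays epoch n = D

def dys (y : ℤ) : ℤ := 365*y + y/4 - y/100 + y/400

def rd (D : Date) : ℤ :=
  dys (D.y + (D.m - 3)/12) + (153*((D.m - 3) % 12) + 2)/5 + D.d - 1 - 730485

lemma nb_ge (y m : ℤ) : 28 ≤ nbdays y m ∧ nbdays y m ≤ 31 := by
  unfold nbdays; split_ifs <;> omega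

lemma rd_day (y m d : ℤ) : rd ⟨y, m, d⟩ = rd ⟨y, m, 1⟩ + d - 1 := by
  simp only [rd]; ring

lemma rd_epoch : rd epoch = 0 := by norm_num [rd, dys, epoch]

lemma addMonths_next (y m : ℤ) : addMonths ⟨y, m, 1⟩ 1 = ⟨y + m/12, 1 + m%12, 1⟩ := by
  have h : m - 1 + 1 = m := by ring
  simp only [addMonths, h]
  have := nb_ge (y + m/12) (1 + m%12)
  congr 1
  omega

lemma addMonths_prev (y m : ℤ) : addMonths ⟨y, m, 1⟩ (-1) = ⟨y + (m-2)/12, 1 + (m-2)%12, 1⟩ := by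
  have h : m - 1 + -1 = m - 2 := by ring
  simp only [addMonths, h]
  have := nb_ge (y + (m-2)/12) (1 + (m-2)%12)
  congr 1
  omega

lemma rd_next (y m : ℤ) (h1 : 1 ≤ m) (h2 : m ≤ 12) :
    rd ⟨y + m/12, 1 + m%12, 1⟩ = rd ⟨y, m, 1⟩ + nbdays y m := by
  simp only [rd, dys, nbdays]
  interval_cases m <;> norm_num <;> first | (split_ifs <;> omega) | omega

lemma rd_prev (y m : ℤ) (h1 : 1 ≤ m) (h2 : m ≤ 12) :
    rd ⟨y + (m-2)/12, 1 + (m-2)%12, 1⟩ =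
      rd ⟨y, m, 1⟩ - nbdays (y + (m-2)/12) (1 + (m-2)%12) := by
  simp only [rd, dys, nbdays]
  interval_cases m <;> norm_num <;> first | (split_ifs <;> omega) | omega

lemma step_det {c c1 c2 : Conf} (h1 : Step c c1) (h2 : Step c c2) : c1 = c2 := by
  cases h1 with
  | @add_days y m d n p1 p2 =>
    cases h2 with
    | add_days q1 q2 => rfl
    | add_days_over q => omega
    | add_days_under1 q1 q2 => omega
    | add_days_under2 q1 q2 => omega
  | @add_days_over y m d n p =>
    cases h2 with
    | add_days q1 q2 => omega
    | add_days_over q => rfl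
    | add_days_under1 q1 q2 => have := nb_ge y m; omega
    | add_days_under2 q1 q2 => have := nb_ge y m; omega
  | @add_days_under1 y m d n p1 p2 =>
    cases h2 with
    | add_days q1 q2 => omega
    | add_days_over q => have := nb_ge y m; omega
    | add_days_under1 q1 q2 => rfl
    | add_days_under2 q1 q2 => omega
  | @add_days_under2 y m n y' m' p1 p2 =>
    cases h2 with
    | add_days q1 q2 => omega
    | add_days_over q => have := nb_ge y m; omega
    | add_days_under1 q1 q2 => omega
    | @add_days_under2 _ _ _ y'' m'' q1 q2 =>
      rw [p2] at q2
      injection q2 with a b c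
      subst a; subst b; rfl

lemma red_unique {D1 : Date} :
    ∀ {c : Conf}, Reduces c (Conf.done D1) → ∀ {D2 : Date}, Reduces c (Conf.done D2) → D1 = D2 := by
  intro c h1
  induction h1 using Relation.ReflTransGen.head_induction_on with
  | refl =>
    intro D2 h2
    rcases h2.cases_head with h | ⟨c', hs, _⟩
    · injection h
    · exact absurd hs (by intro hs; nomatch hs)
  | head hs hr ih =>
    intro D2 h2
    rcases h2.cases_head with h | ⟨c', hs', hr'⟩
    · rw [h] at hs; nomatch hs
    · cases step_det hs hs'; exact ih hr'

lemma valid_mk {y m d : ℤ} (h1 : 1 ≤ m) (h2 : m ≤ 12) (h3 : 1 ≤ d) (h4 : d ≤ nbdays y m) :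
    (Date.mk y m d).valid := ⟨h1, h2, h3, h4⟩

lemma valid_elim {y m d : ℤ} (h : (Date.mk y m d).valid) :
    1 ≤ m ∧ m ≤ 12 ∧ 1 ≤ d ∧ d ≤ nbdays y m := h

lemma reaches : ∀ (k : ℕ) (n : ℤ), n.natAbs ≤ k → ∀ y m d, (Date.mk y m d).valid →
    ∃ D' : Date, D'.valid ∧ Reduces (Conf.pending ⟨y,m,d⟩ n) (Conf.done D') ∧
      rd D' = rd ⟨y,m,d⟩ + n := by
  intro k
  induction k with
  | zero =>
    intro n hn y m d hv
    have hn0 : n = 0 := by omega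
    subst hn0
    obtain ⟨hm1, hm2, hd1, hd2⟩ := valid_elim hv
    have hstep : Step (Conf.pending ⟨y,m,d⟩ 0) (Conf.done ⟨y,m,d+0⟩) :=
      Step.add_days (by omega) (by omega)
    rw [show d + (0:ℤ) = d by ring] at hstep
    exact ⟨⟨y,m,d⟩, valid_mk hm1 hm2 hd1 hd2, Relation.ReflTransGen.single hstep, by omega⟩
  | succ k ih =>
    intro n hn y m d hv
    obtain ⟨hm1, hm2, hd1, hd2⟩ := valid_elim hv
    by_cases hc1 : d + n ≤ nbdays y m
    · by_cases hc2 : 1 ≤ d + n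
      · exact ⟨⟨y,m,d+n⟩, valid_mk hm1 hm2 hc2 hc1,
          Relation.ReflTransGen.single (Step.add_days hc2 hc1),
          by rw [rd_day y m (d+n), rd_day y m d]; ring⟩
      · by_cases hd : 1 < d
        · -- under1
          have hstep : Step (Conf.pending ⟨y,m,d⟩ n) (Conf.pending ⟨y,m,1⟩ (d-1+n)) :=
            Step.add_days_under1 hd (by omega)
          have hnb := nb_ge y m
          obtain ⟨D', hv', hr', heq⟩ := ih (d-1+n) (by omega) y m 1 (valid_mk hm1 hm2 (le_refl 1) (by omega))
          refine ⟨D', hv', Relation.ReflTransGen.head hstep hr', ?_⟩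
          rw [heq, rd_day y m d]; ring
        · -- d = 1, under2
          have hd1' : d = 1 := by omega
          subst hd1'
          have hmod : 0 ≤ (m-2) % 12 ∧ (m-2) % 12 < 12 := ⟨Int.emod_nonneg _ (by norm_num), Int.emod_lt_of_pos _ (by norm_num)⟩
          have hnb' := nb_ge (y + (m-2)/12) (1 + (m-2)%12)
          have hprev := addMonths_prev y m
          have hstep : Step (Conf.pending ⟨y,m,1⟩ n)
              (Conf.pending ⟨y + (m-2)/12, 1 + (m-2)%12, 1⟩ (n + nbdays (y + (m-2)/12) (1 + (m-2)%12))) :=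
            Step.add_days_under2 (by omega) hprev
          have hrdp := rd_prev y m hm1 hm2
          by_cases hpos : 0 ≤ n + nbdays (y + (m-2)/12) (1 + (m-2)%12)
          · refine ⟨⟨y + (m-2)/12, 1 + (m-2)%12, 1 + (n + nbdays (y + (m-2)/12) (1 + (m-2)%12))⟩,
              valid_mk (by omega) (by omega) (by omega) (by omega),
              Relation.ReflTransGen.head hstep
                (Relation.ReflTransGen.single (Step.add_days (by omega) (by omega))), ?_⟩
            rw [rd_day (y + (m-2)/12) (1 + (m-2)%12) (1 + (n + nbdays (y + (m-2)/12) (1 + (m-2)%12)))]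
            omega
          · obtain ⟨D', hv', hr', heq⟩ := ih (n + nbdays (y + (m-2)/12) (1 + (m-2)%12)) (by omega)
              (y + (m-2)/12) (1 + (m-2)%12) 1 (valid_mk (by omega) (by omega) (le_refl 1) (by omega))
            refine ⟨D', hv', Relation.ReflTransGen.head hstep hr', ?_⟩
            rw [heq]; omega
    · -- over
      push_neg at hc1
      have hnext := addMonths_next y m
      have hstep : Step (Conf.pending ⟨y,m,d⟩ n)
          (Conf.pending (addMonths ⟨y, m, 1⟩ 1) (n - (nbdays y m - d) - 1)) :=
        Step.add_days_over hc1
      rw [hnext] at hstep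
      have hrdn := rd_next y m hm1 hm2
      have hnb := nb_ge y m
      have hmod : 0 ≤ m % 12 ∧ m % 12 < 12 := ⟨Int.emod_nonneg _ (by norm_num), Int.emod_lt_of_pos _ (by norm_num)⟩
      have hnb2 := nb_ge (y + m/12) (1 + m%12)
      obtain ⟨D', hv', hr', heq⟩ := ih (n - (nbdays y m - d) - 1) (by omega)
        (y + m/12) (1 + m%12) 1 (valid_mk (by omega) (by omega) (le_refl 1) (by omega))
      refine ⟨D', hv', Relation.ReflTransGen.head hstep hr', ?_⟩
      rw [heq, hrdn, rd_day y m d]; ring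

lemma epoch_valid : epoch.valid := by
  constructor <;> norm_num [epoch, nbdays]

lemma addDays_epoch (n : ℤ) : (addDays epoch n).valid ∧ rd (addDays epoch n) = n := by
  obtain ⟨D', hv, hr, hrd⟩ := reaches n.natAbs n le_rfl 2000 3 1 epoch_valid
  have hep : ∃ D'' : Date, D''.valid ∧ Reduces (Conf.pending epoch n) (Conf.done D'') :=
    ⟨D', hv, by rw [show epoch = (⟨2000,3,1⟩ : Date) from rfl]; exact hr⟩
  have hspec := Classical.epsilon_spec hep
  refine ⟨hspec.1, ?_⟩
  have he : addDays epoch n = D' := red_unique hspec.2 (by rw [show epoch = (⟨2000,3,1⟩ : Date) from rfl]; exact hr)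
  rw [he, hrd, show (⟨2000,3,1⟩ : Date) = epoch from rfl, rd_epoch]; ring

lemma dys_gap (a : ℤ) : dys a + 365 ≤ dys (a+1) ∧ dys (a+1) ≤ dys a + 366 := by
  unfold dys; omega

lemma dys_mono' (a : ℤ) (n : ℕ) : dys a + 365*n ≤ dys (a + n) := by
  induction n with
  | zero => norm_num
  | succ k ih =>
    have hg := dys_gap (a + k)
    have he : a + ((k+1 : ℕ) : ℤ) = (a + (k : ℕ)) + 1 := by push_cast; ring
    rw [he]; push_cast; omega

lemma dys_mono {a b : ℤ} (h : a ≤ b) : dys a + 365*(b-a) ≤ dys b := by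
  obtain ⟨n, rfl⟩ : ∃ n : ℕ, b = a + n := ⟨(b-a).toNat, by omega⟩
  have := dys_mono' a n
  omega

lemma dys_gap_leap (a : ℤ) :
    dys (a+1) = dys a + 365 + (if (a+1) % 4 = 0 ∧ ((a+1) % 100 ≠ 0 ∨ (a+1) % 400 = 0) then 1 else 0) := by
  unfold dys; split_ifs <;> omega

lemma year_eq {Y1 Y2 o1 o2 l1 l2 : ℤ} (h : dys Y1 + o1 = dys Y2 + o2)
    (hb1 : 0 ≤ o1 ∧ o1 ≤ 364 + l1) (hb2 : 0 ≤ o2 ∧ o2 ≤ 364 + l2)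
    (hl1 : dys (Y1+1) = dys Y1 + 365 + l1) (hl2 : dys (Y2+1) = dys Y2 + 365 + l2) : Y1 = Y2 := by
  rcases lt_trichotomy Y1 Y2 with hlt | he | hlt
  · have h1 := dys_mono (show Y1 + 1 ≤ Y2 by omega); omega
  · exact he
  · have h1 := dys_mono (show Y2 + 1 ≤ Y1 by omega); omega

lemma offset_bound (y m d : ℤ) (h1 : 1 ≤ m) (h2 : m ≤ 12) (h3 : 1 ≤ d) (h4 : d ≤ nbdays y m) :
    0 ≤ (153*((m-3)%12)+2)/5 + d - 1 ∧
    (153*((m-3)%12)+2)/5 + d - 1 ≤ 364 +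
      (if (y + (m-3)/12 + 1) % 4 = 0 ∧ ((y + (m-3)/12 + 1) % 100 ≠ 0 ∨ (y + (m-3)/12 + 1) % 400 = 0)
        then 1 else 0) := by
  simp only [nbdays] at h4
  interval_cases m <;> norm_num at h4 ⊢ <;> split_ifs at h4 ⊢ <;> omega

set_option maxHeartbeats 2000000 in
lemma rd_inj {D1 D2 : Date} (h1 : D1.valid) (h2 : D2.valid) (h : rd D1 = rd D2) : D1 = D2 := by
  obtain ⟨y1,m1,d1⟩ := D1; obtain ⟨y2,m2,d2⟩ := D2
  obtain ⟨a1,b1,c1,e1⟩ := valid_elim h1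
  obtain ⟨a2,b2,c2,e2⟩ := valid_elim h2
  simp only [rd] at h
  have hb1 := offset_bound y1 m1 d1 a1 b1 c1 e1
  have hb2 := offset_bound y2 m2 d2 a2 b2 c2 e2
  have hY : y1 + (m1-3)/12 = y2 + (m2-3)/12 :=
    year_eq (by omega) hb1 hb2 (dys_gap_leap (y1 + (m1-3)/12)) (dys_gap_leap (y2 + (m2-3)/12))
  rw [hY] at h
  have ho : (153*((m1-3)%12)+2)/5 + d1 = (153*((m2-3)%12)+2)/5 + d2 := by omega
  simp only [Date.mk.injEq]
  simp only [nbdays] at e1 e2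
  interval_cases m1 <;> interval_cases m2 <;> norm_num at ho hY e1 e2 ⊢ <;> omega

lemma toDelta_rd {D : Date} (hv : D.valid) : toDelta D = rd D := by
  have h1 := addDays_epoch (rd D)
  have hD : addDays epoch (rd D) = D := rd_inj h1.1 hv h1.2
  have hex : ∃ n : ℤ, addDays epoch n = D := ⟨rd D, hD⟩
  have hspec : addDays epoch (toDelta D) = D := Classical.epsilon_spec hex
  have h2 := addDays_epoch (toDelta D)
  rw [← h2.2, hspec]

/-- **Leap days recur exactly every 1461 days from the epoch** within the bounds
`(1900, 3, 1)` to `(2100, 2, 28)`: for every valid date `D = (y, m, d)` in these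
bounds, `m = 2 ∧ d = 29` iff `toΔ(D) ≡ 1460 (mod 1461)`. -/
theorem leap_day_cycle (y m d : ℤ) (hv : (Date.mk y m d).valid)
    (hlb : Date.le ⟨1900, 3, 1⟩ ⟨y, m, d⟩)
    (hub : Date.le ⟨y, m, d⟩ ⟨2100, 2, 28⟩) :
    (m = 2 ∧ d = 29) ↔ toDelta ⟨y, m, d⟩ ≡ 1460 [ZMOD 1461] := by
  rw [toDelta_rd hv]
  obtain ⟨a1, a2, a3, a4⟩ := valid_elim hv
  show (m = 2 ∧ d = 29) ↔ rd ⟨y, m, d⟩ % 1461 = 1460 % 1461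
  simp only [Date.le] at hlb hub
  simp only [rd, dys]
  simp only [nbdays] at a4
  interval_cases m <;> (try split_ifs at a4) <;> norm_num <;>
    first
      | ((first
          | (have hc : y/100 - y/400 = 15 := by omega)
          | (have hc : (y + -1)/100 - (y + -1)/400 = 15 := by omega)) <;>
        (rcases (by omega : y ≤ 2099 ∨ 2100 ≤ y) with hy|hy <;>
          rcases (by omega : y % 4 = 0 ∨ y % 4 = 1 ∨ y % 4 = 2 ∨ y % 4 = 3) with h4|h4|h4|h4 <;> omega))
      | (have hc : (y + -1)/100 - (y + -1)/400 = 15 := by omega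
         rcases (by omega : y ≤ 2099 ∨ 2100 ≤ y) with hy|hy <;>
           rcases (by omega : y % 4 = 0 ∨ y % 4 = 1 ∨ y % 4 = 2 ∨ y % 4 = 3) with h4|h4|h4|h4 <;> omega)
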